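/- ∫₀^{2π} log((2/3)·(1−cos θ)²) · (−(4/3)·cos θ + (1/3)·cos 2θ) dθ/(2π) = 7/3. -/

import Mathlib

open MeasureTheory intervalIntegral Real Set Filter Topology

lemma ilog1 : IntervalIntegrable Real.log volume 0 1 := by
  rw [intervalIntegrable_iff_integrableOn_Ioc_of_le zero_le_one]
  apply MeasureTheory.integrableOn_Ioc_of_intervalIntegral_norm_bounded_left
      (a := fun n : ℕ => 1/(n+1)) (l := atTop) (I := 1)
  · intro n
    have h0 : (0:ℝ) < 1/(n+1) := by positivity
    have h1 : (1:ℝ)/(n+1) ≤ 1 := by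
      rw [div_le_one (by positivity)]; linarith [Nat.cast_nonneg (α := ℝ) n]
    have : IntervalIntegrable Real.log volume (1/(n+1)) 1 := by
      apply ContinuousOn.intervalIntegrable
      apply Real.continuousOn_log.mono
      rw [uIcc_of_le h1]
      intro x hx
      exact ne_of_gt (lt_of_lt_of_le h0 hx.1)
    exact this.1
  · exact tendsto_one_div_add_atTop_nhds_zero_nat
  · apply Eventually.of_forall
    intro n
    have h0 : (0:ℝ) < 1/(n+1) := by positivity
    have h1 : (1:ℝ)/(n+1) ≤ 1 := by
      rw [div_le_one (by positivity)]; linarith [Nat.cast_nonneg (α := ℝ) n]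
    rw [← intervalIntegral.integral_of_le h1]
    have heq : ∀ x ∈ uIcc (1/(n+1:ℝ)) 1, ‖Real.log x‖ = -Real.log x := by
      rw [uIcc_of_le h1]
      intro x hx
      rw [Real.norm_eq_abs, abs_of_nonpos (Real.log_nonpos (le_of_lt (lt_of_lt_of_le h0 hx.1)) hx.2)]
    rw [intervalIntegral.integral_congr heq, intervalIntegral.integral_neg,
      integral_log]
    have hl : Real.log (1/(n+1)) ≤ 0 := Real.log_nonpos (le_of_lt h0) h1
    have : (1:ℝ)/(n+1) * Real.log (1/(n+1)) ≤ 0 :=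
      mul_nonpos_of_nonneg_of_nonpos (le_of_lt h0) hl
    simp only [Real.log_one]
    nlinarith

lemma ilog2pi : IntervalIntegrable Real.log volume 0 (2*π) := by
  apply ilog1.trans
  apply ContinuousOn.intervalIntegrable
  apply Real.continuousOn_log.mono
  rw [uIcc_of_le (by nlinarith [pi_gt_three] : (1:ℝ) ≤ 2*π)]
  intro x hx
  exact ne_of_gt (lt_of_lt_of_le one_pos hx.1)

lemma iabs1 : IntervalIntegrable (fun θ => |Real.log θ|) volume 0 (2*π) := by
  simpa [Real.norm_eq_abs] using ilog2pi.norm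

lemma iabs2 : IntervalIntegrable (fun θ => |Real.log (2*π - θ)|) volume 0 (2*π) := by
  have := iabs1.comp_sub_left (2*π)
  simpa using this.symm
lemma one_sub_cos (θ : ℝ) : 1 - Real.cos θ = 2 * Real.sin (θ/2)^2 := by
  have h : Real.cos θ = 2 * Real.cos (θ/2)^2 - 1 := by
    rw [← Real.cos_two_mul]; congr 1; ring
  have h2 := Real.sin_sq_add_cos_sq (θ/2)
  linarith

lemma Lf_bound {θ : ℝ} (h1 : 0 < θ) (h2 : θ < 2*π) :
    |Real.log ((2/3)*(1 - Real.cos θ)^2)| ≤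
      (|Real.log (8/(3*π^4))| + |Real.log (1/6)|) +
        (4*|Real.log θ| + 4*|Real.log (2*π-θ)|) := by
  have hπ := Real.pi_pos
  set m := min θ (2*π - θ) with hm
  have hm0 : 0 < m := lt_min h1 (by linarith)
  have hs0 : 0 < Real.sin (θ/2) := Real.sin_pos_of_pos_of_lt_pi (by linarith) (by linarith)
  have hlow : m/π ≤ Real.sin (θ/2) := by
    rcases le_or_gt θ π with hc | hc
    · have h3 := Real.mul_le_sin (x := θ/2) (by linarith) (by linarith)
      have hmin : m = θ := min_eq_left (by linarith)
      calc m/π = 2/π*(θ/2) := by rw [hmin]; field_simp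
        _ ≤ _ := h3
    · have h3 := Real.mul_le_sin (x := π - θ/2) (by linarith) (by linarith)
      rw [Real.sin_pi_sub] at h3
      have hmin : m = 2*π - θ := min_eq_right (by linarith)
      calc m/π = 2/π*(π - θ/2) := by rw [hmin]; field_simp
        _ ≤ _ := h3
  have hup : Real.sin (θ/2) ≤ m/2 := by
    rcases min_cases θ (2*π - θ) with ⟨he, _⟩ | ⟨he, _⟩ <;> rw [hm, he]
    · have := Real.sin_le (le_of_lt (by linarith : (0:ℝ) < θ/2)); linarith
    · have h4 : Real.sin (θ/2) = Real.sin (π - θ/2) := (Real.sin_pi_sub _).symm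
      have h3 := Real.sin_le (le_of_lt (by linarith : (0:ℝ) < π - θ/2))
      linarith
  have hkey : (2/3)*(1 - Real.cos θ)^2 = (8/3)*Real.sin (θ/2)^4 := by
    rw [one_sub_cos]; ring
  have hub : (2/3)*(1 - Real.cos θ)^2 ≤ (1/6)*m^4 := by
    rw [hkey]
    have h5 : Real.sin (θ/2)^4 ≤ (m/2)^4 := pow_le_pow_left₀ (le_of_lt hs0) hup 4
    nlinarith
  have hlb : (8/(3*π^4))*m^4 ≤ (2/3)*(1 - Real.cos θ)^2 := by
    rw [hkey]
    have h5 : (m/π)^4 ≤ Real.sin (θ/2)^4 := pow_le_pow_left₀ (by positivity) hlow 4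
    have heq : (8/(3*π^4))*m^4 = (8/3)*(m/π)^4 := by
      field_simp
    rw [heq]
    nlinarith
  have hπ4 : (0:ℝ) < 8/(3*π^4) := by positivity
  have hlog_m4 : Real.log (m^4) = 4 * Real.log m := by
    rw [Real.log_pow]; norm_num
  have hpos : 0 < (2/3)*(1 - Real.cos θ)^2 := by
    rw [hkey]; positivity
  have hm4 : (m:ℝ)^4 ≠ 0 := ne_of_gt (pow_pos hm0 4)
  have hL_ub : Real.log ((2/3)*(1 - Real.cos θ)^2) ≤ Real.log (1/6) + 4*Real.log m :=
    calc Real.log ((2/3)*(1 - Real.cos θ)^2) ≤ Real.log ((1/6)*m^4) :=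
          Real.log_le_log hpos hub
      _ = Real.log (1/6) + 4*Real.log m := by
          rw [Real.log_mul (by norm_num) hm4, hlog_m4]
  have hL_lb : Real.log (8/(3*π^4)) + 4*Real.log m ≤ Real.log ((2/3)*(1 - Real.cos θ)^2) :=
    calc Real.log (8/(3*π^4)) + 4*Real.log m = Real.log ((8/(3*π^4))*m^4) := by
          rw [Real.log_mul (ne_of_gt hπ4) hm4, hlog_m4]
      _ ≤ _ := Real.log_le_log (mul_pos hπ4 (pow_pos hm0 4)) hlb
  have hmlog : |Real.log m| ≤ |Real.log θ| + |Real.log (2*π-θ)| := by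
    rcases min_cases θ (2*π - θ) with ⟨he, _⟩ | ⟨he, _⟩ <;> rw [hm, he] <;>
      [linarith [abs_nonneg (Real.log (2*π-θ))]; linarith [abs_nonneg (Real.log θ)]]
  rw [abs_le]
  constructor
  · have := neg_abs_le (Real.log (8/(3*π^4)))
    have := neg_abs_le (Real.log m)
    have := abs_nonneg (Real.log (1/6))
    linarith
  · have := le_abs_self (Real.log (1/6))
    have := le_abs_self (Real.log m)
    have := abs_nonneg (Real.log (8/(3*π^4)))
    linarith
lemma integrand_integrable :
    IntervalIntegrable (fun θ => Real.log ((2/3)*(1 - Real.cos θ)^2) *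
      (-(4/3)*Real.cos θ + (1/3)*Real.cos (2*θ))) volume 0 (2*π) := by
  have h2π : (0:ℝ) < 2*π := by positivity
  set C := |Real.log (8/(3*π^4))| + |Real.log (1/6)| with hC
  have hC0 : 0 ≤ C := by positivity
  have hB : IntervalIntegrable
      (fun θ => (5/3)*(C + (4*|Real.log θ| + 4*|Real.log (2*π-θ)|))) volume 0 (2*π) := by
    apply IntervalIntegrable.const_mul
    exact (_root_.intervalIntegrable_const).add ((iabs1.const_mul 4).add (iabs2.const_mul 4))
  apply hB.mono_fun'
  · apply Measurable.aestronglyMeasurable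
    apply Measurable.mul
    · exact Real.measurable_log.comp (by fun_prop)
    · fun_prop
  · rw [uIoc_of_le (le_of_lt h2π)]
    filter_upwards [ae_restrict_mem measurableSet_Ioc] with θ hθ
    have hg : |(-(4/3)*Real.cos θ + (1/3)*Real.cos (2*θ))| ≤ 5/3 := by
      have c1 := Real.abs_cos_le_one θ
      have c2 := Real.abs_cos_le_one (2*θ)
      calc |(-(4/3)*Real.cos θ + (1/3)*Real.cos (2*θ))|
          ≤ |(-(4/3)*Real.cos θ)| + |(1/3)*Real.cos (2*θ)| := abs_add_le _ _
        _ = (4/3)*|Real.cos θ| + (1/3)*|Real.cos (2*θ)| := by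
            rw [abs_mul, abs_mul, abs_neg,
              abs_of_nonneg (by norm_num : (0:ℝ) ≤ 4/3),
              abs_of_nonneg (by norm_num : (0:ℝ) ≤ 1/3)]
        _ ≤ 5/3 := by linarith
    rcases eq_or_lt_of_le hθ.2 with heq | hlt
    · have : Real.cos θ = 1 := by rw [heq, Real.cos_two_pi]
      simp only [Real.norm_eq_abs, this]
      norm_num
      positivity
    · have hL := Lf_bound hθ.1 hlt
      have habs : ‖Real.log ((2/3)*(1 - Real.cos θ)^2) *
          (-(4/3)*Real.cos θ + (1/3)*Real.cos (2*θ))‖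
          = |Real.log ((2/3)*(1 - Real.cos θ)^2)| *
            |(-(4/3)*Real.cos θ + (1/3)*Real.cos (2*θ))| := by
        rw [Real.norm_eq_abs, abs_mul]
      rw [habs]
      have h1 := abs_nonneg (Real.log ((2/3)*(1 - Real.cos θ)^2))
      have h2 := abs_nonneg (-(4/3)*Real.cos θ + (1/3)*Real.cos (2*θ))
      have h3 := abs_nonneg (Real.log θ)
      have h4 := abs_nonneg (Real.log (2*π - θ))
      nlinarith
noncomputable def Lf (θ : ℝ) : ℝ := Real.log ((2/3)*(1 - Real.cos θ)^2)
noncomputable def Gf (θ : ℝ) : ℝ := -(4/3)*Real.sin θ + (1/6)*Real.sin (2*θ)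

lemma tendstoLsin : Tendsto (fun θ => Lf θ * Real.sin θ) (𝓝[>] (0:ℝ)) (𝓝 0) := by
  have hπ := Real.pi_pos
  have hev : Ioo (0:ℝ) (2*π) ∈ 𝓝[>] (0:ℝ) :=
    Ioo_mem_nhdsGT (by positivity)
  have hsin : Tendsto (fun θ : ℝ => Real.sin (θ/2)) (𝓝[>] 0) (𝓝[>] 0) := by
    apply tendsto_nhdsWithin_of_tendsto_nhds_of_eventually_within
    · have hc : Continuous fun θ : ℝ => Real.sin (θ/2) := by fun_prop
      exact (hc.tendsto' 0 0 (by simp)).mono_left nhdsWithin_le_nhds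
    · filter_upwards [hev] with θ hθ
      exact Real.sin_pos_of_pos_of_lt_pi (by linarith [hθ.1]) (by linarith [hθ.2])
  have hxlog : Tendsto (fun x : ℝ => Real.log x * x) (𝓝[>] (0:ℝ)) (𝓝 0) := by
    have h := tendsto_log_mul_rpow_nhdsGT_zero (r := 1) one_pos
    apply h.congr'
    filter_upwards [self_mem_nhdsWithin] with x hx
    rw [Real.rpow_one]
  have hT : Tendsto (fun θ : ℝ => Real.log (Real.sin (θ/2)) * Real.sin (θ/2))
      (𝓝[>] (0:ℝ)) (𝓝 0) := hxlog.comp hsin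
  have h1 : Tendsto (fun θ : ℝ => Real.log (8/3) * Real.sin θ) (𝓝[>] (0:ℝ)) (𝓝 0) := by
    have hc : Continuous fun θ : ℝ => Real.log (8/3) * Real.sin θ := by fun_prop
    exact (hc.tendsto' 0 0 (by simp)).mono_left nhdsWithin_le_nhds
  have h2 : Tendsto (fun θ : ℝ => (Real.log (Real.sin (θ/2)) * Real.sin (θ/2)) *
      (8 * Real.cos (θ/2))) (𝓝[>] (0:ℝ)) (𝓝 0) := by
    have hc : Tendsto (fun θ : ℝ => 8 * Real.cos (θ/2)) (𝓝[>] (0:ℝ)) (𝓝 (8 * Real.cos 0)) := by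
      have : Continuous fun θ : ℝ => 8 * Real.cos (θ/2) := by fun_prop
      exact (this.tendsto' 0 (8 * Real.cos 0) (by norm_num)).mono_left nhdsWithin_le_nhds
    simpa using hT.mul hc
  have hrhs := h1.add h2
  rw [add_zero] at hrhs
  apply hrhs.congr'
  filter_upwards [hev] with θ hθ
  have hs0 : 0 < Real.sin (θ/2) :=
    Real.sin_pos_of_pos_of_lt_pi (by linarith [hθ.1]) (by linarith [hθ.2])
  have h1c : 1 - Real.cos θ = 2 * Real.sin (θ/2)^2 := by
    have h : Real.cos θ = 2 * Real.cos (θ/2)^2 - 1 := by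
      rw [← Real.cos_two_mul]; congr 1; ring
    have h2 := Real.sin_sq_add_cos_sq (θ/2)
    linarith
  have hL : Lf θ = Real.log (8/3) + 4 * Real.log (Real.sin (θ/2)) := by
    unfold Lf
    rw [show (2/3)*(1 - Real.cos θ)^2 = (8/3) * Real.sin (θ/2)^4 by rw [h1c]; ring,
      Real.log_mul (by norm_num) (ne_of_gt (pow_pos hs0 4)), Real.log_pow]
    norm_num
  have hsin2 : Real.sin θ = 2 * Real.sin (θ/2) * Real.cos (θ/2) := by
    rw [show θ = 2*(θ/2) by ring, Real.sin_two_mul]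
    ring_nf
  rw [hL, hsin2]
  ring

lemma tendstoLG0 : Tendsto (fun θ => Lf θ * Gf θ) (𝓝[>] (0:ℝ)) (𝓝 0) := by
  have hc : Tendsto (fun θ : ℝ => Real.cos θ/3 - 4/3) (𝓝[>] (0:ℝ))
      (𝓝 (Real.cos 0/3 - 4/3)) := by
    have : Continuous fun θ : ℝ => Real.cos θ/3 - 4/3 := by fun_prop
    exact (this.tendsto _).mono_left nhdsWithin_le_nhds
  have h := tendstoLsin.mul hc
  rw [zero_mul] at h
  apply h.congr
  intro θ
  unfold Lf Gf
  rw [Real.sin_two_mul]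
  ring

lemma LGrefl (θ : ℝ) : -(Lf (2*π - θ) * Gf (2*π - θ)) = Lf θ * Gf θ := by
  unfold Lf Gf
  rw [Real.cos_two_pi_sub, Real.sin_two_mul, Real.sin_two_mul, Real.sin_two_pi_sub,
    Real.cos_two_pi_sub]
  ring

lemma tendstoLG2pi : Tendsto (fun θ => Lf θ * Gf θ) (𝓝[<] (2*π)) (𝓝 0) := by
  have hmap : Tendsto (fun θ : ℝ => 2*π - θ) (𝓝[<] (2*π)) (𝓝[>] (0:ℝ)) := by
    apply tendsto_nhdsWithin_of_tendsto_nhds_of_eventually_within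
    · have hc : Continuous fun θ : ℝ => 2*π - θ := by fun_prop
      exact (hc.tendsto' (2*π) 0 (by ring)).mono_left nhdsWithin_le_nhds
    · filter_upwards [self_mem_nhdsWithin] with θ hθ
      exact sub_pos.2 (mem_Iio.1 hθ)
  have h := (tendstoLG0.comp hmap).neg
  rw [neg_zero] at h
  exact h.congr fun θ => LGrefl θ

noncomputable def Ff (θ : ℝ) : ℝ :=
  Lf θ * Gf θ + ((7/3)*θ + 2*Real.sin θ - (1/6)*Real.sin (2*θ))

lemma hasDerivFf {x : ℝ} (hx1 : 0 < x) (hx2 : x < 2*π) :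
    HasDerivAt Ff (Real.log ((2/3)*(1 - Real.cos x)^2) *
      (-(4/3)*Real.cos x + (1/3)*Real.cos (2*x))) x := by
  have hπ := Real.pi_pos
  have hs : 0 < Real.sin (x/2) :=
    Real.sin_pos_of_pos_of_lt_pi (by linarith) (by linarith)
  have hcne : 1 - Real.cos x ≠ 0 := by
    rw [one_sub_cos]; positivity
  have hne : (2/3)*(1 - Real.cos x)^2 ≠ 0 := by
    rw [one_sub_cos]; positivity
  have hu : HasDerivAt (fun θ => (2/3)*(1 - Real.cos θ)^2)
      ((2/3)*(2*(1 - Real.cos x)*Real.sin x)) x := by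
    have h := (((Real.hasDerivAt_cos x).const_sub 1).pow 2).const_mul (2/3 : ℝ)
    refine h.congr_deriv ?_
    simp only [Nat.cast_ofNat]
    ring
  have hL : HasDerivAt (fun θ => Real.log ((2/3)*(1 - Real.cos θ)^2))
      ((2/3)*(2*(1 - Real.cos x)*Real.sin x) / ((2/3)*(1 - Real.cos x)^2)) x := hu.log hne
  have hsin2 : HasDerivAt (fun θ : ℝ => Real.sin (2*θ)) (2*Real.cos (2*x)) x := by
    have h := ((hasDerivAt_id x).const_mul (2:ℝ)).sin
    simp only [id_eq, mul_one] at h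
    convert h using 1
    ring
  have hG : HasDerivAt Gf (-(4/3)*Real.cos x + (1/3)*Real.cos (2*x)) x := by
    unfold Gf
    have h := ((Real.hasDerivAt_sin x).const_mul (-(4/3) : ℝ)).add (hsin2.const_mul (1/6 : ℝ))
    refine h.congr_deriv ?_
    ring
  have hψ : HasDerivAt (fun θ : ℝ => (7/3)*θ + 2*Real.sin θ - (1/6)*Real.sin (2*θ))
      ((7/3) + 2*Real.cos x - (1/3)*Real.cos (2*x)) x := by
    have h := (((hasDerivAt_id x).const_mul (7/3 : ℝ)).add
      ((Real.hasDerivAt_sin x).const_mul (2 : ℝ))).sub (hsin2.const_mul (1/6 : ℝ))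
    refine h.congr_deriv ?_
    ring
  have hF := (hL.mul hG).add hψ
  refine hF.congr_deriv (Eq.symm ?_)
  unfold Gf
  rw [Real.cos_two_mul, Real.sin_two_mul]
  have hs2 := Real.sin_sq_add_cos_sq x
  field_simp
  linear_combination (48 - 12*Real.cos x) * hs2
lemma Ff_zero : Ff 0 = 0 := by simp [Ff, Lf, Gf]

lemma Ff_two_pi : Ff (2*π) = 14*π/3 := by
  have hsin4 : Real.sin (2*(2*π)) = 0 := by
    rw [Real.sin_two_mul, Real.sin_two_pi]; ring
  simp [Ff, Lf, Gf, hsin4, Real.sin_two_pi]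
  ring

lemma contFf : ContinuousOn Ff (Icc 0 (2*π)) := by
  have hπ := Real.pi_pos
  intro x hx
  have hψc : Continuous fun θ : ℝ => (7/3)*θ + 2*Real.sin θ - (1/6)*Real.sin (2*θ) := by
    fun_prop
  rcases eq_or_lt_of_le hx.1 with h0 | h0
  · rw [← h0, ← continuousWithinAt_diff_self]
    have hsub : Icc (0:ℝ) (2*π) \ {0} ⊆ Ioi 0 :=
      fun y hy => lt_of_le_of_ne hy.1.1 (Ne.symm hy.2)
    have ht : Tendsto Ff (𝓝[>] (0:ℝ)) (𝓝 (Ff 0)) := by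
      have hψ : Tendsto (fun θ : ℝ => (7/3)*θ + 2*Real.sin θ - (1/6)*Real.sin (2*θ))
          (𝓝[>] (0:ℝ)) (𝓝 0) := by
        exact (hψc.tendsto' 0 0 (by simp)).mono_left nhdsWithin_le_nhds
      have h := tendstoLG0.add hψ
      rw [add_zero] at h
      rw [Ff_zero]
      exact h
    exact ht.mono_left (nhdsWithin_mono _ hsub)
  rcases eq_or_lt_of_le hx.2 with h2 | h2
  · rw [h2, ← continuousWithinAt_diff_self]
    have hsub : Icc (0:ℝ) (2*π) \ {2*π} ⊆ Iio (2*π) :=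
      fun y hy => lt_of_le_of_ne hy.1.2 hy.2
    have ht : Tendsto Ff (𝓝[<] (2*π)) (𝓝 (Ff (2*π))) := by
      have hψ : Tendsto (fun θ : ℝ => (7/3)*θ + 2*Real.sin θ - (1/6)*Real.sin (2*θ))
          (𝓝[<] (2*π)) (𝓝 (14*π/3)) := by
        have h4 : Real.sin (2*(2*π)) = 0 := by
          rw [Real.sin_two_mul]; simp [Real.sin_two_pi]
        have hval : (7/3)*(2*π) + 2*Real.sin (2*π) - (1/6)*Real.sin (2*(2*π)) = 14*π/3 := by
          rw [h4, Real.sin_two_pi]; ring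
        exact (hψc.tendsto' (2*π) (14*π/3) hval).mono_left nhdsWithin_le_nhds
      have h := tendstoLG2pi.add hψ
      rw [zero_add] at h
      rw [Ff_two_pi]
      exact h
    exact ht.mono_left (nhdsWithin_mono _ hsub)
  · apply ContinuousAt.continuousWithinAt
    have hs : 0 < Real.sin (x/2) :=
      Real.sin_pos_of_pos_of_lt_pi (by linarith) (by linarith)
    have hne : (2/3)*(1 - Real.cos x)^2 ≠ 0 := by
      rw [one_sub_cos]; positivity
    have hinner : ContinuousAt (fun θ : ℝ => (2/3)*(1 - Real.cos θ)^2) x := by fun_prop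
    have hLc : ContinuousAt Lf x := hinner.log hne
    unfold Ff
    apply ContinuousAt.add
    · have hGc : Continuous Gf := by unfold Gf; fun_prop
      exact hLc.mul hGc.continuousAt
    · exact hψc.continuousAt

/-- ∫₀^{2π} log((2/3)(1−cos θ)²)·(−(4/3)cos θ + (1/3)cos 2θ) dθ/(2π) = 7/3. -/
theorem statement19 :
    (1 / (2 * Real.pi)) * ∫ θ in (0 : ℝ)..(2 * Real.pi),
        Real.log ((2 / 3) * (1 - Real.cos θ) ^ 2) *
          (-(4 / 3) * Real.cos θ + (1 / 3) * Real.cos (2 * θ)) = 7 / 3 := by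
  have hπ := Real.pi_pos
  have h2π : (0:ℝ) ≤ 2*π := by positivity
  have key := integral_eq_sub_of_hasDeriv_right_of_le h2π contFf
    (fun x hx => (hasDerivFf hx.1 hx.2).hasDerivWithinAt) integrand_integrable
  rw [key, Ff_two_pi, Ff_zero]
  field_simp
  ring
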